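/- Let Γ be a countable amenable group acting continuously on a compact metrizable space X with the weak specification property, and suppose X has more than one point. Then the topological entropy of the action is strictly positive. -/

import Mathlib

open Filter Topology MeasureTheory
open scoped symmDiff

namespace GOE

/-- The action of `Γ` on `X` is continuous (each group element acts continuously). -/
def ContAction (Γ X : Type*) [Group Γ] [TopologicalSpace X] [MulAction Γ X] : Prop :=
  ∀ s : Γ, Continuous fun x : X => s • x

/-- The weak specification property with respect to the metric on `X`. -/
def WeakSpec (Γ X : Type*) [Group Γ] [MetricSpace X] [MulAction Γ X] : Prop :=
  ∀ ε : ℝ, 0 < ε → ∃ F : Finset Γ, F.Nonempty ∧ (∀ s ∈ F, s⁻¹ ∈ F) ∧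
    ∀ (J : Type) (_ : Fintype J) (Fj : J → Finset Γ),
      (∀ i j : J, i ≠ j → ∀ f ∈ F, ∀ s ∈ Fj i, f * s ∉ Fj j) →
      ∀ xj : J → X, ∃ x : X, ∀ j : J, ∀ s ∈ Fj j, dist (s • x) (s • xj j) ≤ ε

/-- Expansiveness of the action with respect to the metric on `X`. -/
def Expansive (Γ X : Type*) [Group Γ] [MetricSpace X] [MulAction Γ X] : Prop :=
  ∃ κ : ℝ, 0 < κ ∧ ∀ x y : X, x ≠ y → ∃ s : Γ, κ < dist (s • x) (s • y)

/-- `(x, y)` is a homoclinic pair: `dist (s • x) (s • y) → 0` as `s → ∞` in `Γ`. -/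
def Homoclinic (Γ : Type*) {X : Type*} [Group Γ] [MetricSpace X] [MulAction Γ X]
    (x y : X) : Prop :=
  ∀ ε : ℝ, 0 < ε → ∃ E : Finset Γ, ∀ s : Γ, s ∉ E → dist (s • x) (s • y) < ε

/-- `T` is pre-injective: injective on each homoclinic equivalence class. -/
def PreInjective (Γ : Type*) {X Y : Type*} [Group Γ] [MetricSpace X] [MulAction Γ X]
    (T : X → Y) : Prop :=
  ∀ x y : X, Homoclinic Γ x y → T x = T y → x = y

/-- `F` is a left Følner sequence for `Γ`. -/
def IsFolner (Γ : Type*) [Group Γ] (F : ℕ → Finset Γ) : Prop :=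
  letI := Classical.decEq Γ
  (∀ n, (F n).Nonempty) ∧
  ∀ K : Finset Γ, K.Nonempty →
    Tendsto (fun n =>
        ((((K.biUnion fun k => (F n).image fun t => k * t) ∆ (F n)).card : ℝ) / (F n).card))
      atTop (𝓝 0)

/-- The minimal number of members of the cover `⋁_{s ∈ E} s⁻¹ U` needed to cover `Z`. -/
noncomputable def covNumOn (Γ X : Type*) [Group Γ] [TopologicalSpace X] [MulAction Γ X]
    (Z : Set X) (U : Finset (Set X)) (E : Finset Γ) : ℕ :=
  sInf {n : ℕ | ∃ c : Finset (Γ → Set X), c.card = n ∧ (∀ f ∈ c, ∀ s : Γ, f s ∈ U) ∧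
    Z ⊆ ⋃ f ∈ c, ⋂ s ∈ E, (fun x : X => s • x) ⁻¹' f s}

/-- Topological entropy of the restriction of the action to the invariant set `Z`,
computed along the Følner sequence `F` via open covers. -/
noncomputable def topEntOn (Γ X : Type*) [Group Γ] [TopologicalSpace X] [MulAction Γ X]
    (Z : Set X) (F : ℕ → Finset Γ) : EReal :=
  ⨆ (U : Finset (Set X)) (_ : (∀ V ∈ U, IsOpen V) ∧ Z ⊆ ⋃₀ (↑U : Set (Set X))),
    Filter.limsup
      (fun n => ((Real.log (covNumOn Γ X Z U (F n)) / (F n).card : ℝ) : EReal)) Filter.atTop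

/-- Maximal cardinality of a `(ρ_E, ε)`-separated subset of `Z`. -/
noncomputable def sepNum (Γ X : Type*) [Group Γ] [MetricSpace X] [MulAction Γ X]
    (Z : Set X) (E : Finset Γ) (ε : ℝ) : ℕ :=
  sSup {n : ℕ | ∃ W : Finset X, (↑W : Set X) ⊆ Z ∧ W.card = n ∧
    ∀ x ∈ W, ∀ y ∈ W, x ≠ y → ∃ s ∈ E, ε ≤ dist (s • x) (s • y)}

/-- Minimal cardinality of a `(ρ_E, ε)`-spanning subset of `Z`. -/
noncomputable def spnNum (Γ X : Type*) [Group Γ] [MetricSpace X] [MulAction Γ X]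
    (Z : Set X) (E : Finset Γ) (ε : ℝ) : ℕ :=
  sInf {n : ℕ | ∃ W : Finset X, (↑W : Set X) ⊆ Z ∧ W.card = n ∧
    ∀ x ∈ Z, ∃ w ∈ W, ∀ s ∈ E, dist (s • x) (s • w) < ε}

/-- Shannon entropy of a finite family of Borel sets. -/
noncomputable def shannonH {X : Type*} [MeasurableSpace X] (μ : Measure X)
    (P : Finset (Set X)) : ℝ :=
  ∑ A ∈ P, -((μ A).toReal * Real.log (μ A).toReal)

/-- The join `⋁_{s ∈ E} s⁻¹ P` of the partition `P`. -/
noncomputable def joinPart (Γ X : Type*) [Group Γ] [MulAction Γ X]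
    (P : Finset (Set X)) (E : Finset Γ) : Finset (Set X) :=
  letI := Classical.decEq Γ
  letI := Classical.decEq (Set X)
  (E.pi fun _ => P).image fun f => ⋂ s, ⋂ (h : s ∈ E), (fun x : X => s • x) ⁻¹' f s h

/-- Dynamical entropy of the partition `P` along the Følner sequence `F`. -/
noncomputable def dynEnt (Γ X : Type*) [Group Γ] [MulAction Γ X] [MeasurableSpace X]
    (μ : Measure X) (P : Finset (Set X)) (F : ℕ → Finset Γ) : ℝ :=
  Filter.limsup (fun n => shannonH μ (joinPart Γ X P (F n)) / (F n).card) Filter.atTop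

/-- `P` is a finite Borel partition of `X`. -/
def IsBorelPartition {X : Type*} [MeasurableSpace X] (P : Finset (Set X)) : Prop :=
  (∀ A ∈ P, MeasurableSet A) ∧ (∀ A ∈ P, ∀ B ∈ P, A ≠ B → Disjoint A B) ∧
    ⋃₀ (↑P : Set (Set X)) = Set.univ

/-- Completely positive entropy of `Γ ↷ (X, μ)` along the Følner sequence `F`. -/
def HasCPE (Γ X : Type*) [Group Γ] [MulAction Γ X] [MeasurableSpace X]
    (μ : Measure X) (F : ℕ → Finset Γ) : Prop :=
  ∀ P : Finset (Set X), IsBorelPartition P → 0 < shannonH μ P → 0 < dynEnt Γ X μ P F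

/-- `K'` is an independence set for the tuple `D` of subsets of `X`. -/
def IsIndepSet (Γ X : Type*) [Group Γ] [MulAction Γ X] {k : ℕ}
    (D : Fin k → Set X) (K' : Finset Γ) : Prop :=
  ∀ ω : Γ → Fin k, ∃ x : X, ∀ s ∈ K', s • x ∈ D (ω s)

/-- The independence density of the tuple `D`. -/
noncomputable def indepDensity (Γ X : Type*) [Group Γ] [MulAction Γ X] {k : ℕ}
    (D : Fin k → Set X) : ℝ :=
  sInf {r : ℝ | ∃ K : Finset Γ, K.Nonempty ∧
    r = ((sSup {n : ℕ | ∃ K' ⊆ K, K'.card = n ∧ IsIndepSet Γ X D K'} : ℕ) : ℝ) / K.card}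

/-- The shift action `(s • x)_t = x_{s⁻¹ t}` on `Γ → A`. -/
def shiftAct {Γ A : Type*} [Group Γ] (s : Γ) (x : Γ → A) : Γ → A := fun t => x (s⁻¹ * t)

end GOE

open GOE

/-- Auxiliary: a maximal `F₀`-separated subset of `E` is nonempty and covers `E`
up to multiplicity `|F₀| + 1`. -/
private lemma exists_maximal_sep {Γ : Type*} [Group Γ] (F₀ : Finset Γ)
    (hsymm : ∀ s ∈ F₀, s⁻¹ ∈ F₀) (E : Finset Γ) (hE : E.Nonempty) :
    ∃ K : Finset Γ, K ⊆ E ∧ K.Nonempty ∧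
      (∀ s ∈ K, ∀ t ∈ K, s ≠ t → t * s⁻¹ ∉ F₀) ∧
      E.card ≤ K.card * (F₀.card + 1) := by
  classical
  set Sep : Finset Γ → Prop := fun K => ∀ s ∈ K, ∀ t ∈ K, s ≠ t → t * s⁻¹ ∉ F₀ with hSepdef
  have hS : (E.powerset.filter Sep).Nonempty := ⟨∅, by simp [hSepdef]⟩
  obtain ⟨K, hKmem, hKmax⟩ := Finset.exists_max_image (E.powerset.filter Sep) Finset.card hS
  rw [Finset.mem_filter, Finset.mem_powerset] at hKmem
  obtain ⟨hKE, hKsep⟩ := hKmem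
  have hKsep' : ∀ s ∈ K, ∀ t ∈ K, s ≠ t → t * s⁻¹ ∉ F₀ := hKsep
  have hcov : E ⊆ K.biUnion (fun k => insert k (F₀.image (· * k))) := by
    intro e he
    by_cases heK : e ∈ K
    · exact Finset.mem_biUnion.2 ⟨e, heK, Finset.mem_insert_self _ _⟩
    have hnot : ¬ Sep (insert e K) := by
      intro hsep'
      have hmem : insert e K ∈ E.powerset.filter Sep := by
        rw [Finset.mem_filter, Finset.mem_powerset]
        exact ⟨Finset.insert_subset he hKE, hsep'⟩
      have h1 := hKmax _ hmem
      rw [Finset.card_insert_of_notMem heK] at h1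
      omega
    have hnot' : ∃ s ∈ insert e K, ∃ t ∈ insert e K, s ≠ t ∧ t * s⁻¹ ∈ F₀ := by
      by_contra hcon
      push_neg at hcon
      exact hnot fun s hs t ht hst => hcon s hs t ht hst
    obtain ⟨s, hs, t, ht, hst, hmem⟩ := hnot'
    rw [Finset.mem_insert] at hs ht
    rcases hs with rfl | hs
    · rcases ht with rfl | ht
      · exact absurd rfl hst
      · refine Finset.mem_biUnion.2 ⟨t, ht, Finset.mem_insert_of_mem ?_⟩
        refine Finset.mem_image.2 ⟨(t * s⁻¹)⁻¹, hsymm _ hmem, ?_⟩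
        group
    · rcases ht with rfl | ht
      · refine Finset.mem_biUnion.2 ⟨s, hs, Finset.mem_insert_of_mem ?_⟩
        exact Finset.mem_image.2 ⟨t * s⁻¹, hmem, by group⟩
      · exact absurd hmem (hKsep' s hs t ht hst)
  have hKne : K.Nonempty := by
    rcases hE with ⟨e, he⟩
    rcases Finset.mem_biUnion.1 (hcov he) with ⟨k, hk, _⟩
    exact ⟨k, hk⟩
  refine ⟨K, hKE, hKne, hKsep', ?_⟩
  calc E.card ≤ (K.biUnion fun k => insert k (F₀.image (· * k))).card :=
        Finset.card_le_card hcov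
    _ ≤ ∑ k ∈ K, (insert k (F₀.image (· * k))).card := Finset.card_biUnion_le
    _ ≤ ∑ _k ∈ K, (F₀.card + 1) := by
        refine Finset.sum_le_sum fun k _ => ?_
        refine le_trans (Finset.card_insert_le _ _) ?_
        exact Nat.add_le_add_right Finset.card_image_le 1
    _ = K.card * (F₀.card + 1) := by rw [Finset.sum_const, smul_eq_mul]

/-- nontrivial actions of amenable groups with weak specification
have positive topological entropy. -/
theorem weakSpec_positive_entropy {Γ X : Type*} [Group Γ] [Countable Γ]
    [MetricSpace X] [CompactSpace X] [MulAction Γ X] [Nontrivial X]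
    (hact : ContAction Γ X)
    (F : ℕ → Finset Γ) (hF : IsFolner Γ F)
    (hws : WeakSpec Γ X) :
    0 < topEntOn Γ X Set.univ F := by
  classical
  obtain ⟨x0, x1, hx01⟩ := exists_pair_ne X
  have hdpos : (0:ℝ) < dist x0 x1 := dist_pos.mpr hx01
  set ε : ℝ := dist x0 x1 / 5 with hεdef
  have hεpos : 0 < ε := by positivity
  obtain ⟨F₀, hF₀ne, hF₀symm, hspec⟩ := hws ε hεpos
  set V₀ : Set X := {x | 2*ε < dist x x1} with hV₀
  set V₁ : Set X := {x | 2*ε < dist x x0} with hV₁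
  set U : Finset (Set X) := {V₀, V₁} with hU
  have hV₀U : V₀ ∈ U := by rw [hU]; exact Finset.mem_insert_self _ _
  have hV₁U : V₁ ∈ U := by rw [hU]; exact Finset.mem_insert_of_mem (Finset.mem_singleton_self _)
  have hUopen : ∀ V ∈ U, IsOpen V := by
    intro V hV
    rw [hU, Finset.mem_insert, Finset.mem_singleton] at hV
    rcases hV with rfl | rfl
    · exact isOpen_lt continuous_const (continuous_id.dist continuous_const)
    · exact isOpen_lt continuous_const (continuous_id.dist continuous_const)
  have hUcover' : ∀ x : X, x ∈ V₀ ∨ x ∈ V₁ := by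
    intro x
    by_contra h
    push_neg at h
    rw [hV₀, hV₁] at h
    simp only [Set.mem_setOf_eq, not_lt] at h
    have ht : dist x0 x1 ≤ dist x x0 + dist x x1 := by
      rw [dist_comm x x0]; exact dist_triangle _ _ _
    linarith [h.1, h.2]
  have hUcover : Set.univ ⊆ ⋃₀ (↑U : Set (Set X)) := by
    intro x _
    rcases hUcover' x with h | h
    · exact ⟨V₀, hV₀U, h⟩
    · exact ⟨V₁, hV₁U, h⟩
  -- the two "target balls" cannot meet a common member of `U`
  have hsepU : ∀ p q : X, dist p x0 ≤ ε → dist q x1 ≤ ε →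
      ∀ W ∈ U, ¬ (p ∈ W ∧ q ∈ W) := by
    intro p q hp hq W hW hpq
    rw [hU, Finset.mem_insert, Finset.mem_singleton] at hW
    rcases hW with rfl | rfl
    · have h2 := hpq.2
      rw [hV₀] at h2
      simp only [Set.mem_setOf_eq] at h2
      have : dist q x1 ≤ ε := hq
      linarith
    · have h1 := hpq.1
      rw [hV₁] at h1
      simp only [Set.mem_setOf_eq] at h1
      linarith
  -- weak specification along a separated set
  have spec2 : ∀ K : Finset Γ, (∀ s ∈ K, ∀ t ∈ K, s ≠ t → t * s⁻¹ ∉ F₀) →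
      ∀ ω : Γ → Fin 2, ∃ x : X,
        ∀ k ∈ K, dist (k • x) (if ω k = 0 then x0 else x1) ≤ ε := by
    intro K hsep ω
    set e : ↥K ≃ Fin K.card :=
      (Fintype.equivFin ↥K).trans (finCongr (Fintype.card_coe K)) with he
    set a : Fin K.card → Γ := fun i => ((e.symm i : ↥K) : Γ) with ha
    have hmemK : ∀ i, a i ∈ K := fun i => (e.symm i).2
    have hcond : ∀ i j : Fin K.card, i ≠ j → ∀ f ∈ F₀,
        ∀ s ∈ ({a i} : Finset Γ), f * s ∉ ({a j} : Finset Γ) := by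
      intro i j hij f hf s hs
      rw [Finset.mem_singleton] at hs; subst hs
      rw [Finset.mem_singleton]
      intro hcontra
      have hij' : a i ≠ a j := fun h => hij (e.symm.injective (Subtype.coe_injective h))
      have hfeq : a j * (a i)⁻¹ = f := by rw [← hcontra]; group
      exact hsep (a i) (hmemK i) (a j) (hmemK j) hij' (hfeq ▸ hf)
    obtain ⟨x, hx⟩ := hspec (Fin K.card) inferInstance (fun i => {a i}) hcond
      (fun i => (a i)⁻¹ • (if ω (a i) = 0 then x0 else x1))
    refine ⟨x, fun k hk => ?_⟩
    have h1 := hx (e ⟨k, hk⟩) (a (e ⟨k, hk⟩)) (Finset.mem_singleton_self _)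
    rw [smul_inv_smul] at h1
    have h2 : a (e ⟨k, hk⟩) = k := congrArg Subtype.val (e.symm_apply_apply ⟨k, hk⟩)
    rwa [h2] at h1
  set c0 : ℝ := Real.log 2 / (F₀.card + 1) with hc0
  have hc0pos : 0 < c0 := div_pos (Real.log_pos one_lt_two) (by positivity)
  have key : ∀ n : ℕ, (c0 : EReal) ≤
      ((Real.log (covNumOn Γ X Set.univ U (F n)) / (F n).card : ℝ) : EReal) := by
    intro n
    have hEne : (F n).Nonempty := hF.1 n
    obtain ⟨K, hKE, hKne, hKsep, hKcard⟩ := exists_maximal_sep F₀ hF₀symm (F n) hEne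
    -- lower bound on the covering number
    have hcovlb : 2 ^ K.card ≤ covNumOn Γ X Set.univ U (F n) := by
      have hSlb : ∀ m ∈ {m : ℕ | ∃ c : Finset (Γ → Set X), c.card = m ∧
          (∀ f ∈ c, ∀ s : Γ, f s ∈ U) ∧
          Set.univ ⊆ ⋃ f ∈ c, ⋂ s ∈ (F n), (fun x : X => s • x) ⁻¹' f s},
          2 ^ K.card ≤ m := by
        rintro m ⟨c, rfl, hvals, hcovc⟩
        choose xω hxω using spec2 K hKsep
        have hmem : ∀ ω : Γ → Fin 2, ∃ f, ∃ _ : f ∈ c,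
            xω ω ∈ ⋂ s ∈ (F n), (fun x : X => s • x) ⁻¹' f s := by
          intro ω
          exact Set.mem_iUnion₂.1 (hcovc (Set.mem_univ (xω ω)))
        choose Φ hΦc hΦmem using hmem
        set ext : (↥K → Fin 2) → (Γ → Fin 2) :=
          fun ψ g => if h : g ∈ K then ψ ⟨g, h⟩ else 0 with hext
        have hextval : ∀ (ψ : ↥K → Fin 2) (k : ↥K), ext ψ (k : Γ) = ψ k := by
          intro ψ k
          simp only [hext]
          rw [dif_pos k.2]
        have hinj : Function.Injective
            (fun ψ : ↥K → Fin 2 => (⟨Φ (ext ψ), hΦc _⟩ : {f // f ∈ c})) := by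
          intro ψ ψ' hΦeq
          by_contra hne
          obtain ⟨k, hk⟩ : ∃ k, ψ k ≠ ψ' k := by
            by_contra hall; push_neg at hall; exact hne (funext hall)
          have hfeq : Φ (ext ψ) = Φ (ext ψ') := congrArg Subtype.val hΦeq
          have hkE : (k : Γ) ∈ (F n) := hKE k.2
          have h1 : (k : Γ) • xω (ext ψ) ∈ Φ (ext ψ) (k : Γ) :=
            Set.mem_iInter₂.1 (hΦmem (ext ψ)) (k : Γ) hkE
          have h2 : (k : Γ) • xω (ext ψ') ∈ Φ (ext ψ) (k : Γ) := by
            have h2' : (k : Γ) • xω (ext ψ') ∈ Φ (ext ψ') (k : Γ) :=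
              Set.mem_iInter₂.1 (hΦmem (ext ψ')) (k : Γ) hkE
            rwa [hfeq]
          have hd1 := hxω (ext ψ) (k : Γ) k.2
          have hd2 := hxω (ext ψ') (k : Γ) k.2
          rw [hextval ψ k] at hd1
          rw [hextval ψ' k] at hd2
          have hfU : Φ (ext ψ) (k : Γ) ∈ U := hvals _ (hΦc (ext ψ)) (k : Γ)
          have hcases : ∀ i : Fin 2, i = 0 ∨ i = 1 := by decide
          rcases hcases (ψ k) with h0 | h0
          · have h1' : ψ' k = 1 := by
              rcases hcases (ψ' k) with h | h
              · exact absurd (h0.trans h.symm) hk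
              · exact h
            rw [h0, if_pos rfl] at hd1
            rw [h1', if_neg (by decide)] at hd2
            exact hsepU _ _ hd1 hd2 _ hfU ⟨h1, h2⟩
          · have h1' : ψ' k = 0 := by
              rcases hcases (ψ' k) with h | h
              · exact h
              · exact absurd (h0.trans h.symm) hk
            rw [h0, if_neg (by decide)] at hd1
            rw [h1', if_pos rfl] at hd2
            exact hsepU _ _ hd2 hd1 _ hfU ⟨h2, h1⟩
        have hcard := Fintype.card_le_of_injective _ hinj
        rw [Fintype.card_fun, Fintype.card_coe, Fintype.card_coe, Fintype.card_fin] at hcard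
        exact hcard
      have hSne : {m : ℕ | ∃ c : Finset (Γ → Set X), c.card = m ∧
          (∀ f ∈ c, ∀ s : Γ, f s ∈ U) ∧
          Set.univ ⊆ ⋃ f ∈ c, ⋂ s ∈ (F n), (fun x : X => s • x) ⁻¹' f s}.Nonempty := by
        refine ⟨_, Finset.image (fun g : ↥(F n) → Bool => fun s : Γ =>
          if h : s ∈ (F n) then (if g ⟨s, h⟩ then V₀ else V₁) else V₀) Finset.univ,
          rfl, ?_, ?_⟩
        · intro f hf s
          rcases Finset.mem_image.1 hf with ⟨g, _, rfl⟩
          beta_reduce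
          split_ifs <;> first | exact hV₀U | exact hV₁U
        · intro x _
          refine Set.mem_iUnion₂.2 ⟨_, Finset.mem_image.2
            ⟨fun s => decide ((s : Γ) • x ∈ V₀), Finset.mem_univ _, rfl⟩, ?_⟩
          refine Set.mem_iInter₂.2 fun s hs => ?_
          simp only [Set.mem_preimage]
          beta_reduce
          rw [dif_pos hs]
          by_cases hmem : s • x ∈ V₀
          · rw [if_pos (by simpa using hmem)]
            exact hmem
          · rw [if_neg (by simpa using hmem)]
            exact (hUcover' (s • x)).resolve_left hmem
      unfold covNumOn
      exact hSlb _ (Nat.sInf_mem hSne)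
    -- translate into the real inequality
    have hEpos : 0 < (F n).card := Finset.card_pos.2 hEne
    have hKpos : 0 < K.card := Finset.card_pos.2 hKne
    have hNpos : 0 < covNumOn Γ X Set.univ U (F n) :=
      lt_of_lt_of_le (Nat.pow_pos (by norm_num)) hcovlb
    have hlog : (K.card : ℝ) * Real.log 2 ≤ Real.log (covNumOn Γ X Set.univ U (F n)) := by
      have h2 : (0:ℝ) < 2 ^ K.card := by positivity
      have h3 : ((2:ℝ)) ^ K.card ≤ (covNumOn Γ X Set.univ U (F n) : ℝ) := by
        exact_mod_cast hcovlb
      have := Real.log_le_log h2 h3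
      rwa [Real.log_pow] at this
    rw [EReal.coe_le_coe_iff, hc0,
      div_le_div_iff₀ (by positivity) (by exact_mod_cast hEpos)]
    have h1 : Real.log 2 * ((F n).card : ℝ) ≤
        Real.log 2 * ((K.card : ℝ) * ((F₀.card : ℝ) + 1)) := by
      refine mul_le_mul_of_nonneg_left ?_ (Real.log_nonneg one_le_two)
      exact_mod_cast hKcard
    calc Real.log 2 * ((F n).card : ℝ)
        ≤ ((K.card : ℝ) * Real.log 2) * ((F₀.card : ℝ) + 1) := by linarith [h1]
      _ ≤ Real.log (covNumOn Γ X Set.univ U (F n)) * ((F₀.card : ℝ) + 1) := by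
          refine mul_le_mul_of_nonneg_right hlog ?_
          positivity
  -- pass to the limsup and the supremum
  have hlim : (c0 : EReal) ≤ Filter.limsup
      (fun n => ((Real.log (covNumOn Γ X Set.univ U (F n)) / (F n).card : ℝ) : EReal))
      Filter.atTop :=
    Filter.le_limsup_of_frequently_le' (Filter.Frequently.of_forall key)
  have hfin : (c0 : EReal) ≤ topEntOn Γ X Set.univ F := by
    refine le_trans hlim ?_
    unfold topEntOn
    exact le_iSup_of_le U (le_iSup_of_le ⟨hUopen, hUcover⟩ le_rfl)
  calc (0 : EReal) < (c0 : EReal) := by exact_mod_cast hc0pos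
    _ ≤ _ := hfin
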